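/- Let a, b ∈ F have normal forms a = x_{i₁}⋯x_{i_m} x_{j_m}⁻¹⋯x_{j₁}⁻¹ where a ∈ A_s (so i_k − k < s and j_k − k < s for all k) and b = x_{c₁}⋯x_{c_u} x_{d_v}⁻¹⋯x_{d₁}⁻¹ where b ∈ B_s (so all c_i, d_j ≥ s+1). Then in F, ab = x_{i₁}⋯x_{i_m} x_{c₁+m}⋯x_{c_u+m} x_{d_v+m}⁻¹⋯x_{d₁+m}⁻¹ x_{j_m}⁻¹⋯x_{j₁}⁻¹, and this word is again in normal form. -/

import Mathlib

/-- The relations of the infinite presentation of Thompson's group `F`: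
`x_k⁻¹ x_n x_k = x_{n+1}` for all `k < n`. -/
def thompsonRels : Set (FreeGroup ℕ) :=
  {r | ∃ n k : ℕ, k < n ∧
    r = (FreeGroup.of k)⁻¹ * FreeGroup.of n * FreeGroup.of k * (FreeGroup.of (n + 1))⁻¹}

/-- Thompson's group `F`, via its standard infinite presentation. -/
def ThompsonF : Type := PresentedGroup thompsonRels

noncomputable instance : Group ThompsonF := by unfold ThompsonF; infer_instance

/-- The standard generators `x_k` of Thompson's group `F`. -/
noncomputable def xgen (k : ℕ) : ThompsonF := PresentedGroup.of k

/-- The element of `F` given by the word `x_{i₁}⋯x_{i_u} · x_{j_v}⁻¹⋯x_{j₁}⁻¹`, where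
`I = [i₁, …, i_u]` and `J = [j₁, …, j_v]`. -/
noncomputable def nfWord (I J : List ℕ) : ThompsonF :=
  (I.map xgen).prod * ((J.map xgen).prod)⁻¹

/-- The word `x_{i₁}⋯x_{i_u} · x_{j_v}⁻¹⋯x_{j₁}⁻¹` encoded by `(I, J)` is in normal form:
both index lists are nondecreasing, and if `x_i` and `x_i⁻¹` both occur then `x_{i+1}`
or `x_{i+1}⁻¹` occurs too. -/
def IsNormalForm (I J : List ℕ) : Prop :=
  I.Pairwise (· ≤ ·) ∧ J.Pairwise (· ≤ ·) ∧
  ∀ i : ℕ, i ∈ I → i ∈ J → (i + 1 ∈ I ∨ i + 1 ∈ J)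

lemma xgen_rel {k n : ℕ} (h : k < n) :
    (xgen k)⁻¹ * xgen n * xgen k = xgen (n + 1) := by
  have hmem : ((FreeGroup.of k)⁻¹ * FreeGroup.of n * FreeGroup.of k *
      (FreeGroup.of (n + 1))⁻¹ : FreeGroup ℕ) ∈ Subgroup.normalClosure thompsonRels :=
    Subgroup.subset_normalClosure ⟨n, k, h, rfl⟩
  have h1 : (QuotientGroup.mk' (Subgroup.normalClosure thompsonRels) :
      FreeGroup ℕ →* PresentedGroup thompsonRels)
      ((FreeGroup.of k)⁻¹ * FreeGroup.of n * FreeGroup.of k * (FreeGroup.of (n + 1))⁻¹) = 1 :=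
    (QuotientGroup.eq_one_iff _).2 hmem
  simp only [map_mul, map_inv] at h1
  have h2 : (xgen k)⁻¹ * xgen n * xgen k * (xgen (n + 1))⁻¹ = 1 := h1
  exact mul_inv_eq_one.mp h2

lemma conj_single (J : List ℕ) (c : ℕ)
    (hJ : ∀ (k : ℕ) (h : k < J.length), J[k] < c + k) :
    ((J.map xgen).prod)⁻¹ * xgen c * (J.map xgen).prod = xgen (c + J.length) := by
  induction J generalizing c with
  | nil => simp
  | cons j J ih =>
    have hj : j < c := by have := hJ 0 (by simp); exact this
    have h2 : ∀ (k : ℕ) (h : k < J.length), J[k] < (c + 1) + k := by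
      intro k hk
      have := hJ (k + 1) (by simpa using Nat.succ_lt_succ hk)
      simp only [List.getElem_cons_succ] at this
      omega
    have key : (xgen j)⁻¹ * xgen c * xgen j = xgen (c + 1) := xgen_rel hj
    have step : ((List.map xgen (j :: J)).prod)⁻¹ * xgen c * (List.map xgen (j :: J)).prod
        = ((J.map xgen).prod)⁻¹ * ((xgen j)⁻¹ * xgen c * xgen j) * (J.map xgen).prod := by
      simp only [List.map_cons, List.prod_cons]
      group
    rw [step, key, ih (c + 1) h2]
    congr 1
    simp [Nat.add_assoc, Nat.add_comm 1]

lemma conj_prod (J L : List ℕ)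
    (h : ∀ c ∈ L, ((J.map xgen).prod)⁻¹ * xgen c * (J.map xgen).prod = xgen (c + J.length)) :
    ((J.map xgen).prod)⁻¹ * (L.map xgen).prod * (J.map xgen).prod
      = ((L.map (· + J.length)).map xgen).prod := by
  induction L with
  | nil => simp
  | cons a L ih =>
    simp only [List.map_cons, List.prod_cons]
    have split : ((J.map xgen).prod)⁻¹ * (xgen a * (L.map xgen).prod) * (J.map xgen).prod
        = (((J.map xgen).prod)⁻¹ * xgen a * (J.map xgen).prod) *
          (((J.map xgen).prod)⁻¹ * (L.map xgen).prod * (J.map xgen).prod) := by group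
    rw [split, h a (by simp), ih (fun c hc => h c (by simp [hc]))]

/-- The normal form of a product `a * b` with `a ∈ A_s` and `b ∈ B_s` is obtained by
shifting the indices of `b`'s normal form by `m` and inserting it in the middle of
`a`'s normal form. -/
theorem normal_form_of_As_mul_Bs (s : ℕ) (hs : 1 ≤ s) (I J C D : List ℕ)
    (hlen : I.length = J.length)
    (hInf : IsNormalForm I J) (hCnf : IsNormalForm C D)
    (hI : ∀ (k : ℕ) (h : k < I.length), I[k] < s + k + 1)
    (hJ : ∀ (k : ℕ) (h : k < J.length), J[k] < s + k + 1)
    (hC : ∀ c ∈ C, s + 1 ≤ c) (hD : ∀ d ∈ D, s + 1 ≤ d) :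
    nfWord I J * nfWord C D
        = nfWord (I ++ C.map (· + I.length)) (J ++ D.map (· + I.length)) ∧
      IsNormalForm (I ++ C.map (· + I.length)) (J ++ D.map (· + I.length)) := by
  set m := I.length with hm
  -- basic bounds
  have hIbound : ∀ i ∈ I, i < s + m := by
    intro i hi
    obtain ⟨k, hk, rfl⟩ := List.mem_iff_getElem.mp hi
    have := hI k hk
    omega
  have hJbound : ∀ j ∈ J, j < s + m := by
    intro j hj
    obtain ⟨k, hk, rfl⟩ := List.mem_iff_getElem.mp hj
    have := hJ k hk
    omega
  constructor
  · -- the group identity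
    have hconjC : ∀ c ∈ C, ((J.map xgen).prod)⁻¹ * xgen c * (J.map xgen).prod
        = xgen (c + J.length) := by
      intro c hc
      refine conj_single J c ?_
      intro k hk
      have h1 := hJ k hk
      have h2 := hC c hc
      omega
    have hconjD : ∀ d ∈ D, ((J.map xgen).prod)⁻¹ * xgen d * (J.map xgen).prod
        = xgen (d + J.length) := by
      intro d hd
      refine conj_single J d ?_
      intro k hk
      have h1 := hJ k hk
      have h2 := hD d hd
      omega
    have hR := conj_prod J C hconjC
    have hS := conj_prod J D hconjD
    rw [← hlen] at hR hS
    set P := (I.map xgen).prod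
    set Q := (J.map xgen).prod
    set R := (C.map xgen).prod
    set S := (D.map xgen).prod
    set R' := ((C.map (· + m)).map xgen).prod with hR'def
    set S' := ((D.map (· + m)).map xgen).prod with hS'def
    have hRe : R = Q * R' * Q⁻¹ := by rw [← hR]; group
    have hSe : S = Q * S' * Q⁻¹ := by rw [← hS]; group
    show P * Q⁻¹ * (R * S⁻¹) = _
    have : nfWord (I ++ C.map (· + m)) (J ++ D.map (· + m))
        = (P * R') * (Q * S')⁻¹ := by
      simp only [nfWord, List.map_append, List.prod_append]
      rfl
    rw [this, hRe, hSe]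
    group
  · -- the normal form property
    obtain ⟨hIs, hJs, hInorm⟩ := hInf
    obtain ⟨hCs, hDs, hCnorm⟩ := hCnf
    have hCmem : ∀ x ∈ C.map (· + m), s + 1 + m ≤ x := by
      intro x hx
      obtain ⟨c, hc, rfl⟩ := List.mem_map.mp hx
      have := hC c hc
      omega
    have hDmem : ∀ x ∈ D.map (· + m), s + 1 + m ≤ x := by
      intro x hx
      obtain ⟨d, hd, rfl⟩ := List.mem_map.mp hx
      have := hD d hd
      omega
    refine ⟨?_, ?_, ?_⟩
    · apply List.pairwise_append.mpr
      refine ⟨hIs, List.Pairwise.map _ (fun a b hab => by omega) hCs, ?_⟩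
      intro a ha b hb
      have h1 := hIbound a ha
      have h2 := hCmem b hb
      omega
    · apply List.pairwise_append.mpr
      refine ⟨hJs, List.Pairwise.map _ (fun a b hab => by omega) hDs, ?_⟩
      intro a ha b hb
      have h1 := hJbound a ha
      have h2 := hDmem b hb
      omega
    · intro i hiL hiR
      rcases List.mem_append.mp hiL with hiI | hiC <;>
        rcases List.mem_append.mp hiR with hiJ | hiD
      · rcases hInorm i hiI hiJ with h | h
        · exact Or.inl (List.mem_append.mpr (Or.inl h))
        · exact Or.inr (List.mem_append.mpr (Or.inl h))
      · exact absurd (hDmem i hiD) (by have := hIbound i hiI; omega)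
      · exact absurd (hCmem i hiC) (by have := hJbound i hiJ; omega)
      · obtain ⟨c, hc, rfl⟩ := List.mem_map.mp hiC
        obtain ⟨d, hd, hdc⟩ := List.mem_map.mp hiD
        have hcd : d = c := by omega
        rcases hCnorm c hc (hcd ▸ hd) with h | h
        · refine Or.inl (List.mem_append.mpr (Or.inr ?_))
          exact List.mem_map.mpr ⟨c + 1, h, by omega⟩
        · refine Or.inr (List.mem_append.mpr (Or.inr ?_))
          exact List.mem_map.mpr ⟨c + 1, h, by omega⟩
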